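/- Let n ≥ 1, let c̄ ≥ 1 be a natural number, and let S be a finite set of positive integers. Consider the battery-model instance with unit conversion efficiency and no leakage having K = n + 1 slots, capacity C = c̄, initial level B₀ = 0, final requirement B_K = 0, and harvests Q(0) = c̄ and Q(i) = 0 for 1 ≤ i ≤ n. Then a vector s : {0,…,n} → ℕ with s(i) ∈ S ∪ {0} for all i is feasible and satisfies Σ_{i=0}^{n} s(i) ≥ c̄ if and only if s(0) = 0 and Σ_{i=1}^{n} s(i) = c̄. -/
import Mathlib


/-- Battery level evolution (in `ℤ`) with unit conversion efficiency and no
leakage: initial level `B₀`, capacity `C`, harvests `Q`, spending vector `s`. -/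
def batteryLevelNL (B₀ C : ℕ) (Q : ℕ → ℕ) (s : ℕ → ℕ) : ℕ → ℤ
  | 0 => (B₀ : ℤ)
  | i + 1 => min (batteryLevelNL B₀ C Q s i + (Q i : ℤ) - (s i : ℤ)) (C : ℤ)

/-- Feasibility of a spending vector `s` over horizon `K`, capacity `C`,
initial level `B₀`, final requirement `BK`, harvests `Q`, and
spending-rate set `S`, with no leakage. -/
def FeasibleNL (K C B₀ BK : ℕ) (Q : ℕ → ℕ) (S : Set ℕ) (s : ℕ → ℕ) : Prop :=
  (∀ i < K, s i ∈ S ∪ {0}) ∧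
  (∀ i < K, (s i : ℤ) ≤ batteryLevelNL B₀ C Q s i) ∧
  (∀ i ≤ K, 0 ≤ batteryLevelNL B₀ C Q s i) ∧
  (BK : ℤ) ≤ batteryLevelNL B₀ C Q s K

lemma battery_key (n cbar : ℕ) (Q : ℕ → ℕ) (hQ0 : Q 0 = cbar)
    (hQ : ∀ i, 1 ≤ i → i ≤ n → Q i = 0) (s : ℕ → ℕ) (hs0 : s 0 = 0) :
    ∀ i ≤ n, batteryLevelNL 0 cbar Q s (i + 1)
      = (cbar : ℤ) - ∑ j ∈ Finset.Icc 1 i, (s j : ℤ) := by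
  intro i hi
  induction i with
  | zero =>
    simp [batteryLevelNL, hQ0, hs0]
  | succ k ih =>
    have hk : k ≤ n := Nat.le_of_succ_le hi
    have hB := ih hk
    have hQk : Q (k + 1) = 0 := hQ (k + 1) (Nat.succ_le_succ (Nat.zero_le k)) hi
    have hsum : ∑ j ∈ Finset.Icc 1 (k + 1), (s j : ℤ)
        = (∑ j ∈ Finset.Icc 1 k, (s j : ℤ)) + (s (k + 1) : ℤ) :=
      Finset.sum_Icc_succ_top (Nat.succ_le_succ (Nat.zero_le k)) _
    have hnn : 0 ≤ ∑ j ∈ Finset.Icc 1 k, (s j : ℤ) :=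
      Finset.sum_nonneg fun j _ => by positivity
    show min (batteryLevelNL 0 cbar Q s (k + 1) + (Q (k + 1) : ℤ) - (s (k + 1) : ℤ)) (cbar : ℤ) = _
    rw [hB, hQk, hsum]
    have : (cbar : ℤ) - ∑ j ∈ Finset.Icc 1 k, (s j : ℤ) + (0 : ℕ) - (s (k + 1) : ℤ) ≤ (cbar : ℤ) := by
      push_cast
      have : 0 ≤ (s (k+1) : ℤ) := by positivity
      linarith
    rw [min_eq_left this]
    push_cast
    ring

/-- Characterization of the feasible high-utility spending vectors of the
reduction instance: `K = n+1` slots, capacity `c̄`, `B₀ = B_K = 0`, harvests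
`Q(0) = c̄` and `Q(i) = 0` for `1 ≤ i ≤ n`. A vector `s` with values in
`S ∪ {0}` is feasible with total spending at least `c̄` iff `s(0) = 0` and
`∑_{i=1}^{n} s(i) = c̄`. -/
theorem reduction_instance_feasibility
    (n : ℕ) (hn : 1 ≤ n) (cbar : ℕ) (hcbar : 1 ≤ cbar)
    (S : Finset ℕ) (hpos : ∀ x ∈ S, 0 < x)
    (Q : ℕ → ℕ) (hQ0 : Q 0 = cbar) (hQ : ∀ i, 1 ≤ i → i ≤ n → Q i = 0)
    (s : ℕ → ℕ) (hs : ∀ i < n + 1, s i ∈ (↑S : Set ℕ) ∪ {0}) :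
    (FeasibleNL (n + 1) cbar 0 0 Q (↑S) s ∧
        cbar ≤ ∑ i ∈ Finset.range (n + 1), s i) ↔
      (s 0 = 0 ∧ ∑ i ∈ Finset.Icc 1 n, s i = cbar) := by
  have hsplit : ∑ i ∈ Finset.range (n + 1), s i = s 0 + ∑ i ∈ Finset.Icc 1 n, s i := by
    have h1 : Finset.Icc 1 n = Finset.Ico 1 (n + 1) := by
      rw [Finset.Ico_add_one_right_eq_Icc]
    rw [h1, Finset.range_eq_Ico, Finset.sum_eq_sum_Ico_succ_bot (Nat.succ_pos n)]
  constructor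
  · rintro ⟨⟨_, hspend, hnonneg, hfinal⟩, htotal⟩
    have hs0 : s 0 = 0 := by
      have := hspend 0 (Nat.succ_pos n)
      simp [batteryLevelNL] at this
      exact this
    have hBn := battery_key n cbar Q hQ0 hQ s hs0 n le_rfl
    have hfin : (0 : ℤ) ≤ (cbar : ℤ) - ∑ j ∈ Finset.Icc 1 n, (s j : ℤ) := by
      rw [← hBn]; exact hnonneg (n + 1) le_rfl
    have hle : ∑ j ∈ Finset.Icc 1 n, s j ≤ cbar := by
      have : (∑ j ∈ Finset.Icc 1 n, s j : ℤ) ≤ (cbar : ℤ) := by push_cast at hfin ⊢; linarith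
      exact_mod_cast this
    have hge : cbar ≤ ∑ j ∈ Finset.Icc 1 n, s j := by
      rw [hsplit, hs0] at htotal; simpa using htotal
    exact ⟨hs0, le_antisymm hle hge⟩
  · rintro ⟨hs0, hsum⟩
    have key := battery_key n cbar Q hQ0 hQ s hs0
    have hpart : ∀ i ≤ n, ∑ j ∈ Finset.Icc 1 i, s j ≤ cbar := by
      intro i hi
      rw [← hsum]
      exact Finset.sum_le_sum_of_subset (Finset.Icc_subset_Icc_right hi)
    have hpartZ : ∀ i ≤ n, (∑ j ∈ Finset.Icc 1 i, (s j : ℤ)) ≤ (cbar : ℤ) := by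
      intro i hi
      have := hpart i hi
      push_cast
      exact_mod_cast this
    refine ⟨⟨hs, ?_, ?_, ?_⟩, ?_⟩
    · intro i hi
      match i with
      | 0 => simp [batteryLevelNL, hs0]
      | k + 1 =>
        have hk : k + 1 ≤ n := Nat.lt_succ_iff.mp hi
        rw [key k (Nat.le_of_succ_le hk)]
        have h1 : ∑ j ∈ Finset.Icc 1 (k + 1), (s j : ℤ)
            = (∑ j ∈ Finset.Icc 1 k, (s j : ℤ)) + (s (k + 1) : ℤ) :=
          Finset.sum_Icc_succ_top (Nat.succ_le_succ (Nat.zero_le k)) _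
        have h2 := hpartZ (k + 1) hk
        rw [h1] at h2
        linarith
    · intro i hi
      match i with
      | 0 => simp [batteryLevelNL]
      | k + 1 =>
        have hk : k ≤ n := Nat.lt_succ_iff.mp hi
        rw [key k hk]
        have := hpartZ k hk
        linarith
    · rw [key n le_rfl]
      have : (∑ j ∈ Finset.Icc 1 n, (s j : ℤ)) = (cbar : ℤ) := by exact_mod_cast hsum
      simp [this]
    · rw [hsplit, hs0, hsum]; simp
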